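/- Let $\Pi$ be an irreducible positive recurrent kernel on a countable set $E$ with invariant probability $\pi$, and $\Pi_2$ the associated pair kernel. If two states $a,b$ are not accordable, then there exists a probability measure on $E^2$, invariant for $\Pi_2$, which gives zero mass to the diagonal $D$. -/

import Mathlib

open MeasureTheory
open scoped ENNReal

/-- The law at time `n` of the chain `X_{n+1} = f(X_n, V_{n+1})` started at `x`
(iterates of the kernel `Π(x,·) = law (f x V₁)` applied to `δ_x`). -/
noncomputable def chainIter {E G : Type*} [MeasurableSpace E] [MeasurableSpace G]
    (f : E → G → E) (β : Measure G) (x : E) : ℕ → Measure E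
  | 0 => Measure.dirac x
  | n + 1 => (chainIter f β x n).bind fun y => Measure.map (fun v => f y v) β

/-- Two states are accordable if some random composition `f_{V_l} ∘ ⋯ ∘ f_{V_1}`
merges them with positive probability (the `V_i` being i.i.d. of law `β`). -/
def AccordableStates {E G : Type*} [MeasurableSpace G]
    (f : E → G → E) (β : Measure G) (x y : E) : Prop :=
  ∃ l : ℕ, 0 < l ∧
    0 < Measure.pi (fun _ : Fin l => β)
      {v : Fin l → G |
        (List.ofFn v).foldl f x = (List.ofFn v).foldl f y}

open Filter
open scoped Topology
set_option linter.unusedSectionVars false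

section Aux
variable {X : Type*} [MeasurableSpace X] [MeasurableSingletonClass X] [Countable X]

lemma msAll (s : Set X) : MeasurableSet s := (Set.to_countable s).measurableSet

lemma measurableAll {Y : Type*} [MeasurableSpace Y] (g : X → Y) : Measurable g :=
  fun _ _ => msAll _

set_option linter.unusedSectionVars false

lemma meas_tsum_univ (μ : Measure X) : μ Set.univ = ∑' x : X, μ {x} := by
  have : μ (⋃ x : X, {x}) = ∑' x : X, μ {x} :=
    measure_iUnion (fun i j hij => by simpa [Set.disjoint_singleton] using hij)
      (fun _ => msAll _)
  simpa [Set.iUnion_of_singleton] using this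

lemma meas_tsum (μ : Measure X) (s : Set X) : μ s = ∑' x : s, μ {(x : X)} := by
  have : μ (⋃ x : s, {(x : X)}) = ∑' x : s, μ {(x : X)} :=
    measure_iUnion
      (fun i j hij => by
        simp only [Set.disjoint_singleton]
        exact fun h => hij (Subtype.ext h))
      (fun _ => msAll _)
  simpa [Set.iUnion_of_singleton_coe] using this

/-- iterates of a kernel -/
noncomputable def kIter (k : X → Measure X) (μ : Measure X) : ℕ → Measure X
  | 0 => μ
  | n + 1 => (kIter k μ n).bind k

lemma kIter_succ (k : X → Measure X) (μ : Measure X) (n : ℕ) :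
    kIter k μ (n + 1) = (kIter k μ n).bind k := rfl

lemma kIter_disint (k : X → Measure X) (μ : Measure X) (n : ℕ) :
    kIter k μ n = μ.bind (fun x => kIter k (Measure.dirac x) n) := by
  induction n with
  | zero => simp [kIter]
  | succ n ih =>
    rw [kIter_succ, ih, Measure.bind_bind (measurableAll _).aemeasurable (measurableAll _).aemeasurable]
    rfl

lemma kIter_shift (k : X → Measure X) (μ : Measure X) (n : ℕ) :
    kIter k μ (n + 1) = kIter k (μ.bind k) n := by
  induction n with
  | zero => rfl
  | succ n ih => rw [kIter_succ, ih]; rfl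

lemma kIter_front (k : X → Measure X) (x : X) (n : ℕ) :
    kIter k (Measure.dirac x) (n + 1)
      = (k x).bind (fun y => kIter k (Measure.dirac y) n) := by
  rw [kIter_shift, Measure.dirac_bind (measurableAll k), kIter_disint]

lemma kIter_univ (k : X → Measure X) (hk : ∀ x, k x Set.univ = 1)
    (μ : Measure X) (n : ℕ) : kIter k μ n Set.univ = μ Set.univ := by
  induction n with
  | zero => rfl
  | succ n ih =>
    rw [kIter_succ, Measure.bind_apply MeasurableSet.univ (measurableAll _).aemeasurable]
    simp only [hk]
    simp [ih]

lemma kIter_invariant (k : X → Measure X) (μ : Measure X) (h : μ.bind k = μ) (n : ℕ) :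
    kIter k μ n = μ := by
  induction n with
  | zero => rfl
  | succ n ih => rw [kIter_succ, ih, h]

end Aux

section Fold
variable {E G : Type*} [MeasurableSpace E] [MeasurableSingletonClass E]
    [Countable E] [MeasurableSpace G]

lemma measurable_param {α β : Type*} [MeasurableSpace α] [MeasurableSpace β]
    (φ : α → E) (hφ : Measurable φ) (F : E → β → E) (hF : ∀ z, Measurable (F z)) :
    Measurable (fun c : α × β => F (φ c.1) c.2) := by
  apply measurable_to_countable'
  intro e
  have : (fun c : α × β => F (φ c.1) c.2) ⁻¹' {e}
      = ⋃ z : E, ((fun c : α × β => φ c.1) ⁻¹' {z}) ∩ ((fun c : α × β => F z c.2) ⁻¹' {e}) := by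
    ext c
    simp only [Set.mem_preimage, Set.mem_iUnion, Set.mem_inter_iff, Set.mem_singleton_iff]
    constructor
    · intro h; exact ⟨φ c.1, rfl, h⟩
    · rintro ⟨z, hz, h⟩; rw [← hz] at h; exact h
  rw [this]
  exact MeasurableSet.iUnion fun z =>
    ((hφ.comp measurable_fst) (measurableSet_singleton z)).inter
      ((hF z).comp measurable_snd (measurableSet_singleton e))

lemma measurable_foldl (f : E → G → E) (hf : ∀ x, Measurable (f x)) :
    ∀ (n : ℕ) (x : E), Measurable (fun v : Fin n → G => (List.ofFn v).foldl f x) := by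
  intro n
  induction n with
  | zero => intro x; simpa using measurable_const (a := x)
  | succ n ih =>
    intro x
    have key : (fun v : Fin (n+1) → G => (List.ofFn v).foldl f x)
        = (fun c : G × (Fin n → G) => (List.ofFn c.2).foldl f (f x c.1))
          ∘ (fun v => (v 0, fun i => v i.succ)) := by
      funext v
      simp [List.ofFn_succ]
    rw [key]
    exact (measurable_param (fun c => f x c) (hf x)
        (fun z w => (List.ofFn w).foldl f z) (fun z => ih z)).comp
      ((measurable_pi_apply 0).prodMk (measurable_pi_iff.2 fun i => measurable_pi_apply _))

end Fold

section Diag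
variable {E G : Type*} [MeasurableSpace E] [MeasurableSingletonClass E]
    [Countable E] [MeasurableSpace G]
    (f : E → G → E)
    (β : Measure G) [IsProbabilityMeasure β]

/-- the pair kernel -/
noncomputable def K2 (f : E → G → E) (β : Measure G) (p : E × E) : Measure (E × E) :=
  Measure.map (fun v => (f p.1 v, f p.2 v)) β

lemma diag_eq (hf : ∀ x, Measurable (f x)) (n : ℕ) : ∀ x y : E,
    kIter (K2 f β) (Measure.dirac (x, y)) n {p : E × E | p.1 = p.2}
      = Measure.pi (fun _ : Fin n => β)
          {v : Fin n → G | (List.ofFn v).foldl f x = (List.ofFn v).foldl f y} := by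
  induction n with
  | zero =>
    intro x y
    show Measure.dirac (x, y) {p : E × E | p.1 = p.2} = _
    by_cases h : x = y
    · subst h
      have h1 : {v : Fin 0 → G | (List.ofFn v).foldl f x = (List.ofFn v).foldl f x}
          = Set.univ := by ext v; simp
      rw [h1, Measure.dirac_apply' _ (msAll _)]
      simp
    · have h1 : {v : Fin 0 → G | (List.ofFn v).foldl f x = (List.ofFn v).foldl f y}
          = ∅ := by ext v; simp [h]
      rw [h1, Measure.dirac_apply' _ (msAll _)]
      simp [h]
  | succ n ih =>
    intro x y
    -- LHS
    have hfront : kIter (K2 f β) (Measure.dirac (x, y)) (n + 1)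
        = (K2 f β (x, y)).bind (fun q => kIter (K2 f β) (Measure.dirac q) n) :=
      kIter_front _ _ _
    have hpair : Measurable (fun v : G => (f x v, f y v)) := (hf x).prodMk (hf y)
    have hLHS : kIter (K2 f β) (Measure.dirac (x, y)) (n + 1) {p : E × E | p.1 = p.2}
        = ∫⁻ v, kIter (K2 f β) (Measure.dirac (f x v, f y v)) n {p : E × E | p.1 = p.2} ∂β := by
      rw [hfront, Measure.bind_apply (msAll _) (measurableAll _).aemeasurable]
      show ∫⁻ q, kIter (K2 f β) (Measure.dirac q) n {p : E × E | p.1 = p.2}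
          ∂(Measure.map (fun v => (f x v, f y v)) β) = _
      rw [lintegral_map (measurableAll _) hpair]
    -- RHS via piFinSuccAbove
    set T : Set (G × (Fin n → G)) := {c : G × (Fin n → G) |
      (List.ofFn c.2).foldl f (f x c.1) = (List.ofFn c.2).foldl f (f y c.1)} with hT
    have hTmeas : MeasurableSet T := by
      have h1 : Measurable (fun c : G × (Fin n → G) => (List.ofFn c.2).foldl f (f x c.1)) :=
        measurable_param (fun v => f x v) (hf x) (fun z w => (List.ofFn w).foldl f z)
          (fun z => measurable_foldl f hf n z)
      have h2 : Measurable (fun c : G × (Fin n → G) => (List.ofFn c.2).foldl f (f y c.1)) :=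
        measurable_param (fun v => f y v) (hf y) (fun z w => (List.ofFn w).foldl f z)
          (fun z => measurable_foldl f hf n z)
      exact (h1.prodMk h2) (msAll {p : E × E | p.1 = p.2})
    have mp := measurePreserving_piFinSuccAbove (fun _ : Fin (n+1) => β) 0
    have hSeq : {v : Fin (n+1) → G | (List.ofFn v).foldl f x = (List.ofFn v).foldl f y}
        = (MeasurableEquiv.piFinSuccAbove (fun _ : Fin (n+1) => G) 0) ⁻¹' T := by
      ext v
      have hv : (fun j : Fin n => v ((0 : Fin (n+1)).succAbove j)) = fun j => v j.succ := by
        funext j; rw [Fin.zero_succAbove]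
      simp only [Set.mem_preimage, MeasurableEquiv.piFinSuccAbove_apply, hT, Set.mem_setOf_eq,
        Fin.insertNthEquiv_zero, Fin.consEquiv_symm_apply]
      rw [show (List.ofFn v) = v 0 :: List.ofFn (Fin.tail v) from by
        rw [List.ofFn_succ]; rfl]
      simp [List.foldl_cons]
    have hRHS : Measure.pi (fun _ : Fin (n+1) => β)
        {v : Fin (n+1) → G | (List.ofFn v).foldl f x = (List.ofFn v).foldl f y}
        = ∫⁻ c, Measure.pi (fun _ : Fin n => β)
            {w : Fin n → G | (List.ofFn w).foldl f (f x c) = (List.ofFn w).foldl f (f y c)}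
            ∂β := by
      rw [hSeq, mp.measure_preimage hTmeas.nullMeasurableSet,
        Measure.prod_apply hTmeas]
      rfl
    rw [hLHS, hRHS]
    exact lintegral_congr fun v => ih (f x v) (f y v)

end Diag

section Marg
variable {E G : Type*} [MeasurableSpace E] [MeasurableSingletonClass E]
    [Countable E] [MeasurableSpace G]
    (f : E → G → E)
    (β : Measure G) [IsProbabilityMeasure β]

/-- the one-point kernel -/
noncomputable def K1 (f : E → G → E) (β : Measure G) (x : E) : Measure E :=
  Measure.map (fun v => f x v) β

lemma chainIter_eq (x : E) (n : ℕ) :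
    chainIter f β x n = kIter (K1 f β) (Measure.dirac x) n := by
  induction n with
  | zero => rfl
  | succ n ih => show (chainIter f β x n).bind _ = _; rw [ih]; rfl

lemma K1_univ (hf : ∀ x, Measurable (f x)) (x : E) : K1 f β x Set.univ = 1 := by
  rw [K1, Measure.map_apply (hf x) MeasurableSet.univ]; simp

lemma K2_univ (hf : ∀ x, Measurable (f x)) (p : E × E) : K2 f β p Set.univ = 1 := by
  rw [K2, Measure.map_apply ((hf p.1).prodMk (hf p.2)) MeasurableSet.univ]; simp

lemma marg_fst (hf : ∀ x, Measurable (f x)) (n : ℕ) : ∀ (x y : E) (s : Set E),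
    kIter (K2 f β) (Measure.dirac (x, y)) n (Prod.fst ⁻¹' s)
      = kIter (K1 f β) (Measure.dirac x) n s := by
  induction n with
  | zero =>
    intro x y s
    rw [show kIter (K2 f β) (Measure.dirac (x,y)) 0 = Measure.dirac (x,y) from rfl,
      show kIter (K1 f β) (Measure.dirac x) 0 = Measure.dirac x from rfl,
      Measure.dirac_apply' _ (msAll _), Measure.dirac_apply' _ (msAll _)]
    rfl
  | succ n ih =>
    intro x y s
    rw [kIter_front, kIter_front,
      Measure.bind_apply (msAll _) (measurableAll _).aemeasurable,
      Measure.bind_apply (msAll _) (measurableAll _).aemeasurable]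
    show ∫⁻ q, kIter (K2 f β) (Measure.dirac q) n (Prod.fst ⁻¹' s)
        ∂(Measure.map (fun v => (f x v, f y v)) β)
      = ∫⁻ z, kIter (K1 f β) (Measure.dirac z) n s ∂(Measure.map (fun v => f x v) β)
    rw [lintegral_map (measurableAll _) ((hf x).prodMk (hf y)),
      lintegral_map (measurableAll _) (hf x)]
    exact lintegral_congr fun v => ih (f x v) (f y v) s

lemma marg_snd (hf : ∀ x, Measurable (f x)) (n : ℕ) : ∀ (x y : E) (s : Set E),
    kIter (K2 f β) (Measure.dirac (x, y)) n (Prod.snd ⁻¹' s)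
      = kIter (K1 f β) (Measure.dirac y) n s := by
  induction n with
  | zero =>
    intro x y s
    rw [show kIter (K2 f β) (Measure.dirac (x,y)) 0 = Measure.dirac (x,y) from rfl,
      show kIter (K1 f β) (Measure.dirac y) 0 = Measure.dirac y from rfl,
      Measure.dirac_apply' _ (msAll _), Measure.dirac_apply' _ (msAll _)]
    rfl
  | succ n ih =>
    intro x y s
    rw [kIter_front, kIter_front,
      Measure.bind_apply (msAll _) (measurableAll _).aemeasurable,
      Measure.bind_apply (msAll _) (measurableAll _).aemeasurable]
    show ∫⁻ q, kIter (K2 f β) (Measure.dirac q) n (Prod.snd ⁻¹' s)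
        ∂(Measure.map (fun v => (f x v, f y v)) β)
      = ∫⁻ z, kIter (K1 f β) (Measure.dirac z) n s ∂(Measure.map (fun v => f y v) β)
    rw [lintegral_map (measurableAll _) ((hf x).prodMk (hf y)),
      lintegral_map (measurableAll _) (hf y)]
    exact lintegral_congr fun v => ih (f x v) (f y v) s

end Marg

section Inv
variable {X : Type*} [MeasurableSpace X] [MeasurableSingletonClass X] [Countable X]

lemma meas_finset (μ : Measure X) (F : Finset X) : μ ↑F = ∑ x ∈ F, μ {x} := by
  have h1 : (↑F : Set X) = ⋃ x ∈ F, {x} := by ext x; simp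
  rw [h1, measure_biUnion_finset ?_ fun _ _ => msAll _]
  intro i _ j _ hij
  simpa [Set.disjoint_singleton] using hij

lemma exists_small_compl (μ : Measure X) [IsProbabilityMeasure μ] {δ : ℝ≥0∞}
    (hδ : δ ≠ 0) : ∃ F : Finset X, μ (↑F)ᶜ ≤ δ := by
  by_contra h
  push_neg at h
  have hsum : ∑' x : X, μ {x} = 1 := by rw [← meas_tsum_univ]; simp
  have hF : ∀ F : Finset X, ∑ x ∈ F, μ {x} + δ ≤ 1 := by
    intro F
    have h2 : μ ↑F + δ ≤ 1 := by
      calc μ ↑F + δ ≤ μ ↑F + μ (↑F)ᶜ := add_le_add_right (h F).le _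
        _ = μ Set.univ := measure_add_measure_compl (msAll _)
        _ = 1 := measure_univ
    rw [← meas_finset]
    exact h2
  have h3 : (1 : ℝ≥0∞) + δ ≤ 1 := by
    rw [ENNReal.tsum_eq_iSup_sum] at hsum
    calc (1:ℝ≥0∞) + δ = (⨆ s : Finset X, ∑ a ∈ s, μ {a}) + δ := by rw [hsum]
      _ = ⨆ s : Finset X, (∑ a ∈ s, μ {a} + δ) := ENNReal.iSup_add _
      _ ≤ 1 := iSup_le hF
  have h4 : δ ≤ 0 := by
    have := (ENNReal.add_le_add_iff_left (a := 1) ENNReal.one_ne_top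
      (b := δ) (c := 0)).1 (by simpa using h3)
    exact this
  exact hδ (le_antisymm h4 zero_le)

variable {E G : Type*} [MeasurableSpace E] [MeasurableSingletonClass E]
    [Countable E] [MeasurableSpace G]
    (f : E → G → E)
    (β : Measure G) [IsProbabilityMeasure β]
    (π : Measure E) [IsProbabilityMeasure π]

lemma pi_disint (hπ : π.bind (K1 f β) = π) (n : ℕ) (s : Set E) :
    π s = ∫⁻ x, kIter (K1 f β) (Measure.dirac x) n s ∂π := by
  conv_lhs => rw [← kIter_invariant (K1 f β) π hπ n]
  rw [kIter_disint, Measure.bind_apply (msAll s) (measurableAll _).aemeasurable]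

lemma chain_mul_le (hπ : π.bind (K1 f β) = π) (x : E) (n : ℕ) (s : Set E) :
    kIter (K1 f β) (Measure.dirac x) n s * π {x} ≤ π s := by
  rw [pi_disint f β π hπ n s]
  calc kIter (K1 f β) (Measure.dirac x) n s * π {x}
      = ∫⁻ z in {x}, kIter (K1 f β) (Measure.dirac z) n s ∂π :=
        (lintegral_singleton (fun z => kIter (K1 f β) (Measure.dirac z) n s) x).symm
    _ ≤ _ := setLIntegral_le_lintegral _ _

lemma chain_le_pi (hπ : π.bind (K1 f β) = π) (x : E) (hx : π {x} ≠ 0) (n : ℕ) (s : Set E) :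
    kIter (K1 f β) (Measure.dirac x) n s ≤ π s * (π {x})⁻¹ := by
  have hdiv : π s * (π {x})⁻¹ = π s / π {x} := rfl
  rw [hdiv]
  exact (ENNReal.le_div_iff_mul_le (Or.inl hx) (Or.inl (measure_ne_top π _))).2
    (chain_mul_le f β π hπ x n s)

lemma pos_singleton (hπ : π.bind (K1 f β) = π)
    (hirr : ∀ x y : E, ∃ n : ℕ, 0 < kIter (K1 f β) (Measure.dirac x) n {y}) (x : E) :
    0 < π {x} := by
  have h1 : ∃ z : E, π {z} ≠ 0 := by
    by_contra h
    push_neg at h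
    have h2 : π Set.univ = 0 := by
      rw [← Set.iUnion_of_singleton E]
      exact measure_iUnion_null h
    simp at h2
  obtain ⟨z, hz⟩ := h1
  obtain ⟨n, hn⟩ := hirr z x
  have h3 := chain_mul_le f β π hπ z n {x}
  have h4 : 0 < kIter (K1 f β) (Measure.dirac z) n {x} * π {z} :=
    ENNReal.mul_pos hn.ne' hz
  exact lt_of_lt_of_le h4 h3
end Inv


/-- if the kernel `Π(x,·) = law (f x V₁)` is irreducible and positively
recurrent, with invariant probability `π`, and the two states `a, b` are not accordable,
then there exists a probability measure on `E²`, invariant for the pair kernel `Π₂`,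
which gives zero mass to the diagonal. -/
theorem stmt_7 {E G : Type*} [MeasurableSpace E] [MeasurableSingletonClass E]
    [Countable E] [MeasurableSpace G]
    (f : E → G → E) (hf : ∀ x, Measurable (f x))
    (β : Measure G) [IsProbabilityMeasure β]
    (π : Measure E) [IsProbabilityMeasure π]
    (hπ : π.bind (fun x => Measure.map (fun v => f x v) β) = π)
    (hirr : ∀ x y : E, ∃ n : ℕ, 0 < chainIter f β x n {y})
    (a b : E) (hab : ¬ AccordableStates f β a b) :
    ∃ ρ : Measure (E × E), IsProbabilityMeasure ρ ∧
      ρ.bind (fun p => Measure.map (fun v => (f p.1 v, f p.2 v)) β) = ρ ∧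
      ρ {p : E × E | p.1 = p.2} = 0 := by
  have hπ' : π.bind (K1 f β) = π := hπ
  have hirr' : ∀ x y : E, ∃ n : ℕ, 0 < kIter (K1 f β) (Measure.dirac x) n {y} := by
    intro x y; obtain ⟨n, hn⟩ := hirr x y; exact ⟨n, by rwa [chainIter_eq] at hn⟩
  have ha0 : π {a} ≠ 0 := (pos_singleton f β π hπ' hirr' a).ne'
  have hb0 : π {b} ≠ 0 := (pos_singleton f β π hπ' hirr' b).ne'
  -- a ≠ b
  have hanb : a ≠ b := by
    intro h
    apply hab
    refine ⟨1, one_pos, ?_⟩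
    have : {v : Fin 1 → G | (List.ofFn v).foldl f a = (List.ofFn v).foldl f b}
        = Set.univ := by subst h; ext v; simp
    rw [this]
    simp
  -- the pair chain and its properties
  set ν : ℕ → Measure (E × E) := kIter (K2 f β) (Measure.dirac (a, b)) with hνdef
  have hν1 : ∀ n, ν n Set.univ = 1 := by
    intro n; rw [hνdef, kIter_univ _ (K2_univ f β hf)]; simp
  have hνD : ∀ n, ν n {p : E × E | p.1 = p.2} = 0 := by
    intro n
    match n with
    | 0 =>
      rw [hνdef, show kIter (K2 f β) (Measure.dirac (a,b)) 0 = Measure.dirac (a,b) from rfl,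
        Measure.dirac_apply' _ (msAll _)]
      simp [hanb]
    | Nat.succ n =>
      rw [hνdef, diag_eq f β hf (n+1) a b]
      have h1 := hab
      rw [AccordableStates] at h1
      push_neg at h1
      exact le_antisymm (h1 (n+1) (Nat.succ_pos n)) zero_le
  -- Cesàro averages
  set A : ℕ → Measure (E × E) :=
    fun N => ((N : ℝ≥0∞) + 1)⁻¹ • ∑ n ∈ Finset.range (N + 1), ν n with hAdef
  have hNne : ∀ N : ℕ, ((N : ℝ≥0∞) + 1) ≠ 0 := fun N => by simp
  have hNnetop : ∀ N : ℕ, ((N : ℝ≥0∞) + 1) ≠ ⊤ := fun N => by simp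
  have hA : ∀ (N : ℕ) (s : Set (E × E)),
      A N s = ((N : ℝ≥0∞) + 1)⁻¹ * ∑ n ∈ Finset.range (N + 1), ν n s := by
    intro N s
    rw [hAdef]
    simp [Measure.smul_apply, Measure.finset_sum_apply, smul_eq_mul]
  have hAuniv : ∀ N, A N Set.univ = 1 := by
    intro N
    rw [hA]
    simp only [hν1, Finset.sum_const, Finset.card_range, nsmul_eq_mul, mul_one]
    rw [show ((N + 1 : ℕ) : ℝ≥0∞) = (N : ℝ≥0∞) + 1 by push_cast; ring]
    exact ENNReal.inv_mul_cancel (hNne N) (hNnetop N)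
  have hAle1 : ∀ (N : ℕ) (s : Set (E × E)), A N s ≤ 1 := by
    intro N s
    rw [← hAuniv N]; exact measure_mono (Set.subset_univ _)
  -- ultrafilter limits
  set U : Ultrafilter ℕ := Filter.hyperfilter ℕ with hUdef
  have hUatTop : (U : Filter ℕ) ≤ Filter.atTop := Nat.hyperfilter_le_atTop
  have hex : ∀ p : E × E, ∃ L : ℝ≥0∞, Tendsto (fun N => A N {p}) U (𝓝 L) := by
    intro p
    obtain ⟨L, -, hL⟩ := isCompact_univ.ultrafilter_le_nhds
      (U.map (fun N => A N {p})) (by simp [le_principal_iff])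
    exact ⟨L, by rwa [Ultrafilter.coe_map] at hL⟩
  choose g hg using hex
  -- the candidate measure
  set ρ : Measure (E × E) := Measure.sum (fun p : E × E => g p • Measure.dirac p) with hρdef
  have hρ : ∀ s : Set (E × E), ρ s = ∑' p : E × E, g p * s.indicator 1 p := by
    intro s
    rw [hρdef, Measure.sum_apply _ (msAll s)]
    exact tsum_congr fun p => by
      rw [Measure.smul_apply, Measure.dirac_apply' _ (msAll s), smul_eq_mul]
  have hρsing : ∀ q : E × E, ρ {q} = g q := by
    intro q
    rw [hρ]
    rw [tsum_eq_single q (fun p hpq => by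
      simp [Set.indicator_apply, hpq])]
    simp [Set.indicator_apply]
  -- finite sums converge
  have hfinlim : ∀ P : Finset (E × E),
      Tendsto (fun N => A N ↑P) U (𝓝 (∑ p ∈ P, g p)) := by
    intro P
    have h1 : Tendsto (fun N => ∑ p ∈ P, A N {p}) U (𝓝 (∑ p ∈ P, g p)) :=
      tendsto_finset_sum P (fun p _ => hg p)
    have h2 : (fun N => ∑ p ∈ P, A N {p}) = fun N => A N ↑P := by
      funext N; rw [meas_finset]
    rwa [h2] at h1
  have hsumle1 : ∀ P : Finset (E × E), ∑ p ∈ P, g p ≤ 1 :=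
    fun P => le_of_tendsto (hfinlim P) (Filter.Eventually.of_forall fun N => hAle1 N _)
  have hρuniv_le : ρ Set.univ ≤ 1 := by
    rw [hρ]
    simp only [Set.indicator_univ, Pi.one_apply, mul_one]
    rw [ENNReal.tsum_eq_iSup_sum]
    exact iSup_le hsumle1
  -- tail bound
  set C : ℝ≥0∞ := (π {a})⁻¹ + (π {b})⁻¹ with hCdef
  have hCne0 : C ≠ 0 := by
    rw [hCdef]
    simp only [ne_eq, add_eq_zero, not_and]
    intro h
    exact absurd h (ENNReal.inv_ne_zero.2 (measure_ne_top π _))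
  have hCnetop : C ≠ ⊤ := by
    rw [hCdef]
    exact ENNReal.add_ne_top.2 ⟨ENNReal.inv_ne_top.2 ha0, ENNReal.inv_ne_top.2 hb0⟩
  have hνtail : ∀ (F : Finset E) (n : ℕ),
      ν n ((↑(F ×ˢ F) : Set (E × E))ᶜ) ≤ π (↑F)ᶜ * C := by
    intro F n
    have hsub : ((↑(F ×ˢ F) : Set (E × E)))ᶜ
        ⊆ (Prod.fst ⁻¹' (↑F : Set E)ᶜ) ∪ (Prod.snd ⁻¹' (↑F : Set E)ᶜ) := by
      intro p hp
      by_contra hc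
      simp only [Set.mem_union, Set.mem_preimage, Set.mem_compl_iff, not_or, not_not] at hc
      exact hp (by simp [Finset.mem_coe, Finset.mem_product, hc.1, hc.2])
    calc ν n ((↑(F ×ˢ F) : Set (E × E))ᶜ)
        ≤ ν n ((Prod.fst ⁻¹' (↑F : Set E)ᶜ) ∪ (Prod.snd ⁻¹' (↑F : Set E)ᶜ)) :=
          measure_mono hsub
      _ ≤ ν n (Prod.fst ⁻¹' (↑F : Set E)ᶜ) + ν n (Prod.snd ⁻¹' (↑F : Set E)ᶜ) :=
          measure_union_le _ _
      _ = kIter (K1 f β) (Measure.dirac a) n ((↑F : Set E)ᶜ)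
            + kIter (K1 f β) (Measure.dirac b) n ((↑F : Set E)ᶜ) := by
          rw [hνdef, marg_fst f β hf n a b, marg_snd f β hf n a b]
      _ ≤ π (↑F)ᶜ * (π {a})⁻¹ + π (↑F)ᶜ * (π {b})⁻¹ :=
          add_le_add (chain_le_pi f β π hπ' a ha0 n _) (chain_le_pi f β π hπ' b hb0 n _)
      _ = π (↑F)ᶜ * C := by rw [hCdef, mul_add]
  have hAtail : ∀ (F : Finset E) (N : ℕ),
      A N ((↑(F ×ˢ F) : Set (E × E))ᶜ) ≤ π (↑F)ᶜ * C := by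
    intro F N
    rw [hA]
    calc ((N : ℝ≥0∞) + 1)⁻¹ * ∑ n ∈ Finset.range (N + 1), ν n ((↑(F ×ˢ F) : Set (E × E))ᶜ)
        ≤ ((N : ℝ≥0∞) + 1)⁻¹ * ∑ _n ∈ Finset.range (N + 1), π (↑F)ᶜ * C :=
          mul_le_mul_right (Finset.sum_le_sum fun n _ => hνtail F n) _
      _ = ((N : ℝ≥0∞) + 1)⁻¹ * (((N : ℝ≥0∞) + 1) * (π (↑F)ᶜ * C)) := by
          rw [Finset.sum_const, Finset.card_range, nsmul_eq_mul]
          rw [show ((N + 1 : ℕ) : ℝ≥0∞) = (N : ℝ≥0∞) + 1 by push_cast; ring]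
      _ = π (↑F)ᶜ * C := by
          rw [← mul_assoc, ENNReal.inv_mul_cancel (hNne N) (hNnetop N), one_mul]
  have h1leP : ∀ F : Finset E, 1 ≤ (∑ p ∈ F ×ˢ F, g p) + π (↑F)ᶜ * C := by
    intro F
    refine ge_of_tendsto ((hfinlim (F ×ˢ F)).add_const (π (↑F)ᶜ * C)) ?_
    refine Filter.Eventually.of_forall fun N => ?_
    calc (1 : ℝ≥0∞) = A N Set.univ := (hAuniv N).symm
      _ ≤ A N ↑(F ×ˢ F) + A N ((↑(F ×ˢ F) : Set (E × E))ᶜ) := by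
          rw [show (Set.univ : Set (E × E))
            = (↑(F ×ˢ F) : Set (E × E)) ∪ (↑(F ×ˢ F) : Set (E × E))ᶜ from
            (Set.union_compl_self _).symm]
          exact measure_union_le _ _
      _ ≤ A N ↑(F ×ˢ F) + π (↑F)ᶜ * C := add_le_add_right (hAtail F N) _
  have hρuniv : ρ Set.univ = 1 := by
    refine le_antisymm hρuniv_le ?_
    refine ENNReal.le_of_forall_pos_le_add fun ε hε _ => ?_
    have hδ0 : (ε : ℝ≥0∞) / C ≠ 0 := by
      simp only [ne_eq, ENNReal.div_eq_zero_iff, not_or]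
      exact ⟨ENNReal.coe_ne_zero.2 hε.ne', hCnetop⟩
    obtain ⟨F, hF⟩ := exists_small_compl π hδ0
    have hFC : π (↑F)ᶜ * C ≤ ε := by
      calc π (↑F)ᶜ * C ≤ ((ε : ℝ≥0∞) / C) * C := mul_le_mul_left hF _
        _ = ε := ENNReal.div_mul_cancel hCne0 hCnetop
    calc (1 : ℝ≥0∞) ≤ (∑ p ∈ F ×ˢ F, g p) + π (↑F)ᶜ * C := h1leP F
      _ ≤ ρ Set.univ + ε := by
          refine add_le_add ?_ hFC
          rw [hρ]
          simp only [Set.indicator_univ, Pi.one_apply, mul_one]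
          exact ENNReal.sum_le_tsum _
  -- invariance
  have hK2meas : Measurable (K2 f β) := measurableAll _
  have hbind_univ : (ρ.bind (K2 f β)) Set.univ = 1 := by
    rw [Measure.bind_apply MeasurableSet.univ hK2meas.aemeasurable]
    calc ∫⁻ p, K2 f β p Set.univ ∂ρ = ∫⁻ _p, 1 ∂ρ :=
          lintegral_congr fun p => K2_univ f β hf p
      _ = ρ Set.univ := lintegral_one
      _ = 1 := hρuniv
  have hbind_sing : ∀ q : E × E,
      (ρ.bind (K2 f β)) {q} = ∑' p : E × E, K2 f β p {q} * ρ {p} := by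
    intro q
    rw [Measure.bind_apply (msAll _) hK2meas.aemeasurable, lintegral_countable']
  have hK2netop : ∀ p q : E × E, K2 f β p {q} ≠ ⊤ := fun p q =>
    ne_top_of_le_ne_top ENNReal.one_ne_top
      (le_of_le_of_eq (measure_mono (Set.subset_univ _)) (K2_univ f β hf p))
  have hinvN : ∀ (N : ℕ) (q : E × E) (P : Finset (E × E)),
      ∑ p ∈ P, K2 f β p {q} * A N {p} ≤ A N {q} + ((N : ℝ≥0∞) + 1)⁻¹ := by
    intro N q P
    have step2 : ∑' p : E × E, K2 f β p {q} * A N {p} = (A N).bind (K2 f β) {q} := by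
      rw [Measure.bind_apply (msAll _) hK2meas.aemeasurable, lintegral_countable']
    have step3 : (A N).bind (K2 f β) {q}
        = ((N : ℝ≥0∞) + 1)⁻¹ * ∑ n ∈ Finset.range (N + 1), ν (n + 1) {q} := by
      rw [Measure.bind_apply (msAll _) hK2meas.aemeasurable, hAdef]
      simp only
      rw [lintegral_smul_measure, lintegral_finset_sum_measure]
      congr 1
      refine Finset.sum_congr rfl fun n _ => ?_
      rw [← Measure.bind_apply (msAll _) hK2meas.aemeasurable]
      rfl
    have step4 : ∑ n ∈ Finset.range (N + 1), ν (n + 1) {q}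
        ≤ (∑ n ∈ Finset.range (N + 1), ν n {q}) + 1 := by
      have h5 := Finset.sum_range_succ' (fun n => ν n {q}) (N + 1)
      have h6 : ∑ n ∈ Finset.range (N + 1), ν (n + 1) {q}
          ≤ ∑ n ∈ Finset.range (N + 2), ν n {q} := by
        rw [h5]; exact self_le_add_right _ _
      calc ∑ n ∈ Finset.range (N + 1), ν (n + 1) {q}
          ≤ ∑ n ∈ Finset.range (N + 2), ν n {q} := h6
        _ = (∑ n ∈ Finset.range (N + 1), ν n {q}) + ν (N + 1) {q} :=
            Finset.sum_range_succ _ _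
        _ ≤ _ + 1 := add_le_add_right
            (by rw [← hν1 (N + 1)]; exact measure_mono (Set.subset_univ _)) _
    calc ∑ p ∈ P, K2 f β p {q} * A N {p}
        ≤ ∑' p : E × E, K2 f β p {q} * A N {p} := ENNReal.sum_le_tsum _
      _ = (A N).bind (K2 f β) {q} := step2
      _ = ((N : ℝ≥0∞) + 1)⁻¹ * ∑ n ∈ Finset.range (N + 1), ν (n + 1) {q} := step3
      _ ≤ ((N : ℝ≥0∞) + 1)⁻¹ * ((∑ n ∈ Finset.range (N + 1), ν n {q}) + 1) :=
            mul_le_mul_right step4 _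
      _ = A N {q} + ((N : ℝ≥0∞) + 1)⁻¹ := by rw [mul_add, mul_one, ← hA]
  have hinv0 : Tendsto (fun N : ℕ => ((N : ℝ≥0∞) + 1)⁻¹) (U : Filter ℕ) (𝓝 0) := by
    refine Tendsto.mono_left ?_ hUatTop
    have h7 : Tendsto (fun n : ℕ => ((n : ℝ≥0∞))⁻¹) atTop (𝓝 0) :=
      ENNReal.tendsto_inv_nat_nhds_zero
    have h8 := h7.comp (tendsto_add_atTop_nat 1)
    have h9 : ((fun n : ℕ => ((n : ℝ≥0∞))⁻¹) ∘ (fun N : ℕ => N + 1))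
        = fun N : ℕ => ((N : ℝ≥0∞) + 1)⁻¹ := by
      funext N; simp [Function.comp]
    rwa [h9] at h8
  have hinvlim : ∀ q : E × E, (ρ.bind (K2 f β)) {q} ≤ g q := by
    intro q
    have hbs : (ρ.bind (K2 f β)) {q} = ∑' p : E × E, K2 f β p {q} * g p := by
      rw [hbind_sing q]; exact tsum_congr fun p => by rw [hρsing]
    rw [hbs, ENNReal.tsum_eq_iSup_sum]
    refine iSup_le fun P => ?_
    have hLHS : Tendsto (fun N => ∑ p ∈ P, K2 f β p {q} * A N {p}) U
        (𝓝 (∑ p ∈ P, K2 f β p {q} * g p)) :=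
      tendsto_finset_sum _ fun p _ =>
        ENNReal.Tendsto.const_mul (hg p) (Or.inr (hK2netop p q))
    have hRHS : Tendsto (fun N => A N {q} + ((N : ℝ≥0∞) + 1)⁻¹) U (𝓝 (g q + 0)) :=
      (hg q).add hinv0
    have h10 := le_of_tendsto_of_tendsto' hLHS hRHS (fun N => hinvN N q P)
    rwa [add_zero] at h10
  have hsing_le : ∀ q : E × E, (ρ.bind (K2 f β)) {q} ≤ ρ {q} := fun q =>
    (hinvlim q).trans_eq (hρsing q).symm
  have hsing_eq : ∀ q : E × E, (ρ.bind (K2 f β)) {q} = ρ {q} := by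
    by_contra hc
    push_neg at hc
    obtain ⟨q, hq⟩ := hc
    have hlt : (ρ.bind (K2 f β)) {q} < ρ {q} := lt_of_le_of_ne (hsing_le q) hq
    have ht1 : ∑' x : E × E, (ρ.bind (K2 f β)) {x} = 1 := by
      rw [← meas_tsum_univ, hbind_univ]
    have ht2 : ∑' x : E × E, ρ {x} = 1 := by rw [← meas_tsum_univ, hρuniv]
    have h11 := ENNReal.tsum_lt_tsum (by rw [ht1]; exact ENNReal.one_ne_top) hsing_le hlt
    rw [ht1, ht2] at h11
    exact lt_irrefl 1 h11
  have hinv : ρ.bind (K2 f β) = ρ := by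
    ext s _hs
    rw [meas_tsum _ s, meas_tsum _ s]
    exact tsum_congr fun x => by rw [hsing_eq]
  -- diagonal
  have hgD : ∀ q : E × E, q.1 = q.2 → g q = 0 := by
    intro q hq
    have hA0 : ∀ N, A N {q} = 0 := by
      intro N
      refine le_antisymm ?_ zero_le
      have h12 : A N {q} ≤ A N {p : E × E | p.1 = p.2} :=
        measure_mono (by
          intro p hp
          rw [Set.mem_singleton_iff] at hp
          subst hp
          exact hq)
      have h13 : A N {p : E × E | p.1 = p.2} = 0 := by
        rw [hA]
        simp [hνD]
      rw [h13] at h12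
      exact h12
    have h14 := hg q
    rw [show (fun N => A N {q}) = fun _ : ℕ => (0 : ℝ≥0∞) from funext hA0] at h14
    exact (tendsto_nhds_unique h14 tendsto_const_nhds)
  have hρD : ρ {p : E × E | p.1 = p.2} = 0 := by
    rw [hρ]
    convert tsum_zero with p
    by_cases hp : p.1 = p.2
    · rw [hgD p hp, zero_mul]
    · simp [Set.indicator_apply, hp]
  exact ⟨ρ, ⟨hρuniv⟩, hinv, hρD⟩
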